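/- Let G be a toroidal grid diagram with exactly one O marked for destabilization. Then every positive enhanced domain (D, ε, ρ) has index I(D, ε, ρ) ≥ 0. -/

import Mathlib

/-- A domain on the toroidal grid (a `ℤ`-linear combination of squares,
`D i j` being the multiplicity of the square with lower-left corner at the
intersection point `(i,j)` of the `i`-th horizontal and `j`-th vertical
circle) joining the generators `x` and `y` (generators are matchings, i.e.
permutations, `x` containing the points `(i, x i)`). -/
def IsGridDomain {n : ℕ} [NeZero n] (D : Fin n → Fin n → ℤ)
    (x y : Equiv.Perm (Fin n)) : Prop :=
  ∀ i j : Fin n,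
    D i (j - 1) + D (i - 1) j - D i j - D (i - 1) (j - 1) =
      (if y i = j then 1 else 0) - (if x i = j then 1 else 0)

/-- The average of the four local multiplicities of `D` around the point `(i,j)`. -/
def avgMult {n : ℕ} [NeZero n] (D : Fin n → Fin n → ℤ) (i j : Fin n) : ℚ :=
  ((D i j + D i (j - 1) + D (i - 1) j + D (i - 1) (j - 1) : ℤ) : ℚ) / 4

/-- Lipshitz's index formula `I(D) = ∑_{p ∈ x} n_p(D) + ∑_{p ∈ y} n_p(D)`. -/
def lipshitzIndex {n : ℕ} [NeZero n] (D : Fin n → Fin n → ℤ)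
    (x y : Equiv.Perm (Fin n)) : ℚ :=
  (∑ i, avgMult D i (x i)) + (∑ i, avgMult D i (y i))


open Fin.CommRing

private lemma sub_one_val {m : ℕ} (δ : Fin (m+1)) (h : δ ≠ 0) : (δ - 1).val = δ.val - 1 := by
  have := Fin.coe_sub_one δ
  rw [if_neg h] at this
  exact this

private lemma ind_split (v k : ℕ) :
    ((if v ≠ 0 ∧ v ≤ k+1 then (1:ℤ) else 0))
      = (if v ≠ 0 ∧ v ≤ k then (1:ℤ) else 0) + (if v = k+1 then (1:ℤ) else 0) := by
  by_cases h1 : v = k+1 <;> by_cases h2 : v ≠ 0 ∧ v ≤ k <;>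
    simp [h1, h2] <;> omega

private lemma walk_formula {m : ℕ} (u : Fin (m+1) → ℤ) (p q : Fin (m+1))
    (hu : ∀ j, u j - u (j - 1) = (if j = p then 1 else 0) - (if j = q then 1 else 0))
    (j₁ j₂ : Fin (m+1)) :
    u j₂ - u j₁ = (if (p - j₁).val ≠ 0 ∧ (p - j₁).val ≤ (j₂ - j₁).val then 1 else 0)
                - (if (q - j₁).val ≠ 0 ∧ (q - j₁).val ≤ (j₂ - j₁).val then 1 else 0) := by
  have key : ∀ k : ℕ, k < m + 1 →
      u (j₁ + (k : Fin (m+1))) - u j₁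
        = (if (p - j₁).val ≠ 0 ∧ (p - j₁).val ≤ k then 1 else 0)
        - (if (q - j₁).val ≠ 0 ∧ (q - j₁).val ≤ k then 1 else 0) := by
    intro k
    induction k with
    | zero =>
      intro _
      simp
    | succ k ih =>
      intro hk
      have hk' : k < m + 1 := Nat.lt_of_succ_lt hk
      have e1 : (j₁ + ((k+1 : ℕ) : Fin (m+1))) - 1 = j₁ + (k : Fin (m+1)) := by
        push_cast
        ring
      have hstep := hu (j₁ + ((k+1 : ℕ) : Fin (m+1)))
      rw [e1] at hstep
      have hcast : (((k+1 : ℕ) : Fin (m+1))).val = k + 1 := Fin.val_cast_of_lt hk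
      have hiffp : (j₁ + ((k+1 : ℕ) : Fin (m+1)) = p) ↔ (p - j₁).val = k + 1 := by
        constructor
        · intro h
          have : p - j₁ = ((k+1 : ℕ) : Fin (m+1)) := by rw [← h]; ring
          rw [this, hcast]
        · intro h
          have : p - j₁ = ((k+1 : ℕ) : Fin (m+1)) := Fin.ext (by rw [hcast, h])
          have : p = j₁ + ((k+1 : ℕ) : Fin (m+1)) := by rw [← this]; ring
          exact this.symm
      have hiffq : (j₁ + ((k+1 : ℕ) : Fin (m+1)) = q) ↔ (q - j₁).val = k + 1 := by
        constructor
        · intro h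
          have : q - j₁ = ((k+1 : ℕ) : Fin (m+1)) := by rw [← h]; ring
          rw [this, hcast]
        · intro h
          have : q - j₁ = ((k+1 : ℕ) : Fin (m+1)) := Fin.ext (by rw [hcast, h])
          have : q = j₁ + ((k+1 : ℕ) : Fin (m+1)) := by rw [← this]; ring
          exact this.symm
      rw [if_congr hiffp rfl rfl, if_congr hiffq rfl rfl] at hstep
      have := ih hk'
      rw [ind_split ((p - j₁).val) k, ind_split ((q - j₁).val) k]
      linarith
  have hlt : (j₂ - j₁).val < m + 1 := (j₂ - j₁).isLt
  have := key ((j₂ - j₁).val) hlt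
  rw [Fin.cast_val_eq_self (j₂ - j₁)] at this
  have e : j₁ + (j₂ - j₁) = j₂ := by ring
  rw [e] at this
  exact this

section
variable {m : ℕ} (u : Fin (m+1) → ℤ) (p q : Fin (m+1))
  (hu : ∀ j, u j - u (j - 1) = (if j = p then 1 else 0) - (if j = q then 1 else 0))
include hu

-- endpoint-predecessor is never in the cyclic interval (j, z-1]
private lemma qind_zero (j : Fin (m+1)) :
    ¬ ((q - j).val ≠ 0 ∧ (q - j).val ≤ (q - 1 - j).val) := by
  rintro ⟨h1, h2⟩
  have hδ : q - j ≠ 0 := by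
    intro h; rw [h] at h1; exact h1 rfl
  have e : q - 1 - j = (q - j) - 1 := by ring
  rw [e, sub_one_val _ hδ] at h2
  omega

private lemma walk_max' (j : Fin (m+1)) : u j ≤ u (q - 1) := by
  have h := walk_formula u p q hu j (q - 1)
  rw [if_neg (qind_zero u p q hu j)] at h
  by_cases hp : (p - j).val ≠ 0 ∧ (p - j).val ≤ (q - 1 - j).val <;>
    simp [hp] at h <;> omega

private lemma walk_min' (j : Fin (m+1)) : u (p - 1) ≤ u j := by
  have h := walk_formula u p q hu (p - 1) j
  by_cases hq : (q - (p-1)).val ≠ 0 ∧ (q - (p-1)).val ≤ (j - (p-1)).val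
  · -- then p-indicator is 1 too
    have hm : 1 ≤ m := by
      rcases hq with ⟨h1, h2⟩
      have := (q - (p-1)).isLt
      omega
    have hp : (p - (p-1)).val ≠ 0 ∧ (p - (p-1)).val ≤ (j - (p-1)).val := by
      have e : p - (p - 1) = 1 := by ring
      have hv : (p - (p-1)).val = 1 := by
        rw [e, show (1 : Fin (m+1)) = ((1:ℕ) : Fin (m+1)) by push_cast; rfl]
        exact Fin.val_cast_of_lt (by omega)
      rcases hq with ⟨h1, h2⟩
      rw [hv]
      exact ⟨one_ne_zero, by omega⟩
    rw [if_pos hp, if_pos hq] at h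
    omega
  · rw [if_neg hq] at h
    by_cases hp : (p - (p-1)).val ≠ 0 ∧ (p - (p-1)).val ≤ (j - (p-1)).val <;>
      simp [hp] at h <;> omega

private lemma walk_lip' : u (q - 1) ≤ u (p - 1) + 1 := by
  have h := walk_formula u p q hu (p - 1) (q - 1)
  rw [if_neg (qind_zero u p q hu (p-1))] at h
  by_cases hp : (p - (p-1)).val ≠ 0 ∧ (p - (p-1)).val ≤ (q - 1 - (p-1)).val <;>
    simp [hp] at h <;> omega

private lemma walk_const' (hpq : p = q) (j₁ j₂ : Fin (m+1)) : u j₂ = u j₁ := by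
  have h := walk_formula u p q hu j₁ j₂
  rw [hpq] at h
  omega

end

private lemma count_steps (τ σ : ℕ → ℤ) (htele : ∀ k, τ (k+1) - τ k = σ (k+1))
    (hub : ∀ k, σ k ≤ 1) (hlb : ∀ k, -1 ≤ σ k) (A B : ℕ) (h : A ≤ B) :
    τ B - τ A ≤ (((Finset.Ioc A B).filter (fun k => σ k = 1)).card : ℤ) ∧
    τ A - τ B ≤ (((Finset.Ioc A B).filter (fun k => σ k = -1)).card : ℤ) := by
  induction B, h using Nat.le_induction with
  | base => refine ⟨?_, ?_⟩ <;> simp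
  | succ B hAB ih =>
    have hins : Finset.Ioc A (B+1) = insert (B+1) (Finset.Ioc A B) := by
      ext k; simp only [Finset.mem_Ioc, Finset.mem_insert]; omega
    have hnm : (B+1) ∉ Finset.Ioc A B := by simp
    constructor
    · rw [hins, Finset.filter_insert]
      by_cases hσ : σ (B+1) = 1
      · rw [if_pos hσ, Finset.card_insert_of_notMem (fun hmem => hnm (Finset.mem_filter.mp hmem).1)]
        push_cast
        linarith [htele B, ih.1]
      · rw [if_neg hσ]
        have h1 : σ (B+1) ≤ 0 := by have := hub (B+1); omega
        linarith [htele B, ih.1]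
    · rw [hins, Finset.filter_insert]
      by_cases hσ : σ (B+1) = -1
      · rw [if_pos hσ, Finset.card_insert_of_notMem (fun hmem => hnm (Finset.mem_filter.mp hmem).1)]
        push_cast
        linarith [htele B, ih.2]
      · rw [if_neg hσ]
        have h1 : 0 ≤ σ (B+1) := by have := hlb (B+1); omega
        linarith [htele B, ih.2]

private lemma baseC {m : ℕ} (D : Fin (m+1) → Fin (m+1) → ℤ) (x y : Equiv.Perm (Fin (m+1)))
    (r₀ c₀ : Fin (m+1)) (hdest : y r₀ = c₀) (hDom : IsGridDomain D x y)
    (hpos : ∀ i j, 0 ≤ D i j) (hrz : ∀ i, ∃ j, D i j = 0)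
    (i₀ : Fin (m+1)) (hi₀ : D i₀ c₀ = 0) :
    ((D r₀ c₀ + D (r₀ - 1) c₀ : ℤ) : ℚ) ≤ lipshitzIndex D x y := by
  -- row difference functions
  set w : Fin (m+1) → Fin (m+1) → ℤ := fun i j => D i j - D (i-1) j with hw_def
  have hw : ∀ i j, w i j - w i (j-1) = (if j = x i then 1 else 0) - (if j = y i then 1 else 0) := by
    intro i j
    have h := hDom i j
    have e1 : (if j = x i then (1:ℤ) else 0) = (if x i = j then 1 else 0) := by
      simp only [eq_comm]
    have e2 : (if j = y i then (1:ℤ) else 0) = (if y i = j then 1 else 0) := by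
      simp only [eq_comm]
    simp only [hw_def, e1, e2]
    linarith
  -- row bounds
  have hub : ∀ i j, w i j ≤ 1 := by
    intro i j
    obtain ⟨j₁, hj₁⟩ := hrz i
    have h0 : w i j₁ ≤ 0 := by
      simp only [hw_def]; rw [hj₁]; linarith [hpos (i-1) j₁]
    have h1 := walk_max' (w i) (x i) (y i) (hw i) j
    have h2 := walk_lip' (w i) (x i) (y i) (hw i)
    have h3 := walk_min' (w i) (x i) (y i) (hw i) j₁
    linarith
  have hlb : ∀ i j, -1 ≤ w i j := by
    intro i j
    obtain ⟨j₂, hj₂⟩ := hrz (i-1)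
    have h0 : 0 ≤ w i j₂ := by
      simp only [hw_def]; rw [hj₂]; linarith [hpos i j₂]
    have h1 := walk_min' (w i) (x i) (y i) (hw i) j
    have h2 := walk_lip' (w i) (x i) (y i) (hw i)
    have h3 := walk_max' (w i) (x i) (y i) (hw i) j₂
    linarith
  -- climb bonus
  have climb_bonus : ∀ i, w i c₀ = 1 → 1 ≤ D i (x i) ∧ 1 ≤ D i (y i - 1) := by
    intro i hσ
    have hne : x i ≠ y i := by
      intro he
      obtain ⟨j₁, hj₁⟩ := hrz i
      have h0 : w i j₁ ≤ 0 := by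
        simp only [hw_def]; rw [hj₁]; linarith [hpos (i-1) j₁]
      have := walk_const' (w i) (x i) (y i) (hw i) he j₁ c₀
      omega
    have hmax := walk_max' (w i) (x i) (y i) (hw i) c₀
    have hy : 1 ≤ D i (y i - 1) := by
      have := hpos (i-1) (y i - 1)
      have hσ' := hσ
      have hmax' := hmax
      simp only [hw_def] at hmax' hσ'
      omega
    have e2 : w i (x i) - w i (x i - 1) = 1 := by
      have := hw i (x i)
      rw [if_pos rfl, if_neg hne] at this
      linarith
    have hlip := walk_lip' (w i) (x i) (y i) (hw i)
    have hx : 1 ≤ w i (x i) := by omega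
    have := hpos (i-1) (x i)
    simp only [hw_def] at hx
    exact ⟨by omega, hy⟩
  -- descent bonus
  have desc_bonus : ∀ i, w i c₀ = -1 → 1 ≤ D (i-1) ((x i) - 1) ∧ 1 ≤ D (i-1) (y i) := by
    intro i hσ
    have hmin := walk_min' (w i) (x i) (y i) (hw i) c₀
    have hx : 1 ≤ D (i-1) ((x i) - 1) := by
      have := hpos i ((x i) - 1)
      have hσ' := hσ
      have hmin' := hmin
      simp only [hw_def] at hmin' hσ'
      omega
    have hy : w i (y i) ≤ -1 := by
      by_cases he : x i = y i
      · have := walk_const' (w i) (x i) (y i) (hw i) he c₀ (y i)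
        omega
      · have e : w i (y i) - w i (y i - 1) = -1 := by
          have := hw i (y i)
          rw [if_neg (fun h => he h.symm), if_pos rfl] at this
          linarith
        have hlip := walk_lip' (w i) (x i) (y i) (hw i)
        omega
    have := hpos i (y i)
    simp only [hw_def] at hy
    exact ⟨hx, by omega⟩
  -- column difference function
  set q₀ : Fin (m+1) := x.symm c₀ with hq₀_def
  set v : Fin (m+1) → ℤ := fun i => D i (c₀ - 1) - D i c₀ with hv_def
  have hv : ∀ i, v i - v (i-1) = (if i = r₀ then 1 else 0) - (if i = q₀ then 1 else 0) := by
    intro i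
    have h := hDom i c₀
    have e1 : (if y i = c₀ then (1:ℤ) else 0) = (if i = r₀ then 1 else 0) := by
      have : (y i = c₀) ↔ (i = r₀) := by
        rw [← hdest]
        exact y.apply_eq_iff_eq
      simp only [this]
    have e2 : (if x i = c₀ then (1:ℤ) else 0) = (if i = q₀ then 1 else 0) := by
      have : (x i = c₀) ↔ (i = q₀) := by
        rw [hq₀_def]
        exact x.apply_eq_iff_eq_symm_apply
      simp only [this]
    rw [e1, e2] at h
    simp only [hv_def]
    linarith
  have hv0 : 0 ≤ v i₀ := by
    simp only [hv_def]; rw [hi₀]; linarith [hpos i₀ (c₀-1)]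
  simp only [hv_def] at hv0
  -- corner inequalities
  have hac : D r₀ c₀ ≤ D r₀ (c₀ - 1) := by
    by_cases hq : q₀ = r₀
    · have := walk_const' v r₀ q₀ hv hq.symm i₀ r₀
      simp only [hv_def] at this
      omega
    · have e : v r₀ - v (r₀ - 1) = 1 := by
        have := hv r₀
        rw [if_pos rfl, if_neg (fun h => hq h.symm)] at this
        linarith
      have hlip := walk_lip' v r₀ q₀ hv
      have hmax := walk_max' v r₀ q₀ hv i₀
      simp only [hv_def] at e hlip hmax
      omega
  have hcd : D (r₀-1) c₀ - 1 ≤ D (r₀-1) (c₀ - 1) := by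
    by_cases hq : q₀ = r₀
    · have := walk_const' v r₀ q₀ hv hq.symm i₀ (r₀ - 1)
      simp only [hv_def] at this
      omega
    · have hlip := walk_lip' v r₀ q₀ hv
      have hmax := walk_max' v r₀ q₀ hv i₀
      simp only [hv_def] at hlip hmax
      omega
  -- column profile along c₀, parametrized from i₀
  set τ : ℕ → ℤ := fun k => D (i₀ + (k : Fin (m+1))) c₀ with hτ_def
  set σ : ℕ → ℤ := fun k => w (i₀ + (k : Fin (m+1))) c₀ with hσ_def
  have htele : ∀ k : ℕ, τ (k+1) - τ k = σ (k+1) := by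
    intro k
    have e : (i₀ + ((k+1:ℕ) : Fin (m+1))) - 1 = i₀ + ((k:ℕ) : Fin (m+1)) := by
      push_cast
      ring
    simp only [hτ_def, hσ_def, hw_def]
    rw [e]
  have hσub : ∀ k, σ k ≤ 1 := fun k => hub _ _
  have hσlb : ∀ k, -1 ≤ σ k := fun k => hlb _ _
  -- the distinguished index K'
  set K' : ℕ := if (r₀ - i₀).val = 0 then (m+1) else (r₀ - i₀).val with hK'_def
  have hK'1 : 1 ≤ K' := by
    by_cases h : (r₀ - i₀).val = 0 <;> simp [hK'_def, h] <;> omega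
  have hK'le : K' ≤ m+1 := by
    have := (r₀ - i₀).isLt
    by_cases h : (r₀ - i₀).val = 0 <;> simp [hK'_def, h] <;> omega
  have hiK' : i₀ + ((K' : ℕ) : Fin (m+1)) = r₀ := by
    by_cases h : (r₀ - i₀).val = 0
    · simp only [hK'_def, if_pos h]
      have h2 : r₀ - i₀ = 0 := Fin.ext h
      have h3 : r₀ = i₀ := by
        have := sub_eq_zero.mp h2
        exact this
      rw [Fin.natCast_self, add_zero, h3]
    · simp only [hK'_def, if_neg h]
      rw [Fin.cast_val_eq_self]
      ring
  have hτ0 : τ 0 = 0 := by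
    simp only [hτ_def]
    rw [show ((0:ℕ) : Fin (m+1)) = 0 from rfl, add_zero, hi₀]
  have hτK' : τ K' = D r₀ c₀ := by
    simp only [hτ_def]
    rw [hiK']
  have hτK'1 : τ (K' - 1) = D (r₀ - 1) c₀ := by
    simp only [hτ_def]
    congr 1
    have e : ((K' - 1 : ℕ) : Fin (m+1)) = ((K' : ℕ) : Fin (m+1)) - 1 := by
      have h1 : K' - 1 + 1 = K' := by omega
      calc ((K'-1:ℕ) : Fin (m+1)) = ((K'-1:ℕ) : Fin (m+1)) + 1 - 1 := by ring
      _ = ((K'-1+1 : ℕ) : Fin (m+1)) - 1 := by push_cast; ring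
      _ = ((K' : ℕ) : Fin (m+1)) - 1 := by rw [h1]
    rw [e, ← hiK']
    ring
  have hτtop : τ (m+1) = 0 := by
    simp only [hτ_def]
    rw [Fin.natCast_self, add_zero, hi₀]
  -- climb and descent sets
  set Climb : Finset ℕ := (Finset.Ioc 0 (K'-1)).filter (fun k => σ k = 1) with hCl_def
  set Desc : Finset ℕ := (Finset.Ioc K' (m+1)).filter (fun k => σ k = -1) with hDe_def
  have hClimb : D (r₀-1) c₀ ≤ (Climb.card : ℤ) := by
    have h := (count_steps τ σ htele hσub hσlb 0 (K'-1) (by omega)).1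
    rw [hτ0, hτK'1] at h
    simpa using h
  have hDesc : D r₀ c₀ ≤ (Desc.card : ℤ) := by
    have h := (count_steps τ σ htele hσub hσlb K' (m+1) hK'le).2
    rw [hτtop, hτK'] at h
    simpa using h
  -- the map from indices to rows
  set f : ℕ → Fin (m+1) := fun k => i₀ + (k : Fin (m+1)) with hf_def
  have hmod : ∀ k : ℕ, 1 ≤ k → k ≤ m+1 → ((k:ℕ) : Fin (m+1)).val = if k = m+1 then 0 else k := by
    intro k h1 h2
    by_cases h : k = m+1
    · rw [if_pos h, h, Fin.natCast_self]
      rfl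
    · rw [if_neg h]
      exact Fin.val_cast_of_lt (by omega)
  have hK'val : ((K' : ℕ) : Fin (m+1)).val = if K' = m+1 then 0 else K' := hmod K' hK'1 hK'le
  have hmemCl : ∀ k ∈ Climb, 1 ≤ k ∧ k ≤ K' - 1 := by
    intro k hk
    have := Finset.mem_Ioc.mp (Finset.mem_filter.mp hk).1
    omega
  have hmemDe : ∀ k ∈ Desc, K' + 1 ≤ k ∧ k ≤ m + 1 := by
    intro k hk
    have := Finset.mem_Ioc.mp (Finset.mem_filter.mp hk).1
    omega
  have hmemU : ∀ k ∈ Climb ∪ Desc, 1 ≤ k ∧ k ≤ m + 1 := by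
    intro k hk
    rcases Finset.mem_union.mp hk with h | h
    · have := hmemCl k h; omega
    · have := hmemDe k h; omega
  have hinj : Set.InjOn f ↑(Climb ∪ Desc) := by
    intro k hk k' hk' he
    have hb1 := hmemU k hk
    have hb2 := hmemU k' hk'
    have he2 : ((k:ℕ) : Fin (m+1)) = ((k':ℕ) : Fin (m+1)) := by
      have : i₀ + ((k:ℕ) : Fin (m+1)) = i₀ + ((k':ℕ) : Fin (m+1)) := he
      exact add_left_cancel this
    have he3 : ((k:ℕ) : Fin (m+1)).val = ((k':ℕ) : Fin (m+1)).val := by rw [he2]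
    rw [hmod k hb1.1 hb1.2, hmod k' hb2.1 hb2.2] at he3
    by_cases h1 : k = m+1 <;> by_cases h2 : k' = m+1 <;> simp [h1, h2] at he3 <;> omega
  have hfne : ∀ k ∈ Climb ∪ Desc, f k ≠ r₀ := by
    intro k hk he
    have he2 : ((k:ℕ) : Fin (m+1)).val = ((K' : ℕ) : Fin (m+1)).val := by
      have h3 : i₀ + ((k:ℕ) : Fin (m+1)) = i₀ + ((K':ℕ) : Fin (m+1)) := by
        rw [hiK']
        exact he
      rw [add_left_cancel h3]
    have hbk := hmemU k hk
    rw [hmod k hbk.1 hbk.2, hK'val] at he2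
    rcases Finset.mem_union.mp hk with h | h
    · have := hmemCl k h
      by_cases h1 : k = m+1 <;> by_cases h2 : K' = m+1 <;> simp [h1, h2] at he2 <;> omega
    · have := hmemDe k h
      by_cases h1 : k = m+1 <;> by_cases h2 : K' = m+1 <;> simp [h1, h2] at he2 <;> omega
  set S : Finset (Fin (m+1)) := (Climb ∪ Desc).image f with hS_def
  have hr₀S : r₀ ∉ S := by
    intro h
    obtain ⟨k, hk, he⟩ := Finset.mem_image.mp h
    exact hfne k hk he
  have hdisj : Disjoint Climb Desc := by
    rw [Finset.disjoint_left]
    intro k h1 h2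
    have := hmemCl k h1
    have := hmemDe k h2
    omega
  have cardS : (S.card : ℤ) = Climb.card + Desc.card := by
    rw [hS_def, Finset.card_image_of_injOn hinj, Finset.card_union_of_disjoint hdisj]
    push_cast
    ring
  -- average multiplicity bounds
  have havg_nonneg : ∀ i j, 0 ≤ avgMult D i j := by
    intro i j
    unfold avgMult
    apply div_nonneg _ (by norm_num)
    have hZ : (0:ℤ) ≤ D i j + D i (j-1) + D (i-1) j + D (i-1) (j-1) := by
      linarith [hpos i j, hpos i (j-1), hpos (i-1) j, hpos (i-1) (j-1)]
    exact_mod_cast hZ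
  have havg1 : ∀ i j, 1 ≤ D i j → (1:ℚ)/4 ≤ avgMult D i j := by
    intro i j h
    unfold avgMult
    have hZ : (1:ℤ) ≤ D i j + D i (j-1) + D (i-1) j + D (i-1) (j-1) := by
      linarith [hpos i (j-1), hpos (i-1) j, hpos (i-1) (j-1)]
    have hQ : (1:ℚ) ≤ ((D i j + D i (j-1) + D (i-1) j + D (i-1) (j-1) : ℤ) : ℚ) := by
      exact_mod_cast hZ
    linarith
  have havg2 : ∀ i j, 1 ≤ D i (j-1) → (1:ℚ)/4 ≤ avgMult D i j := by
    intro i j h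
    unfold avgMult
    have hZ : (1:ℤ) ≤ D i j + D i (j-1) + D (i-1) j + D (i-1) (j-1) := by
      linarith [hpos i j, hpos (i-1) j, hpos (i-1) (j-1)]
    have hQ : (1:ℚ) ≤ ((D i j + D i (j-1) + D (i-1) j + D (i-1) (j-1) : ℤ) : ℚ) := by
      exact_mod_cast hZ
    linarith
  have havg3 : ∀ i j, 1 ≤ D (i-1) j → (1:ℚ)/4 ≤ avgMult D i j := by
    intro i j h
    unfold avgMult
    have hZ : (1:ℤ) ≤ D i j + D i (j-1) + D (i-1) j + D (i-1) (j-1) := by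
      linarith [hpos i j, hpos i (j-1), hpos (i-1) (j-1)]
    have hQ : (1:ℚ) ≤ ((D i j + D i (j-1) + D (i-1) j + D (i-1) (j-1) : ℤ) : ℚ) := by
      exact_mod_cast hZ
    linarith
  have havg4 : ∀ i j, 1 ≤ D (i-1) (j-1) → (1:ℚ)/4 ≤ avgMult D i j := by
    intro i j h
    unfold avgMult
    have hZ : (1:ℤ) ≤ D i j + D i (j-1) + D (i-1) j + D (i-1) (j-1) := by
      linarith [hpos i j, hpos i (j-1), hpos (i-1) j]
    have hQ : (1:ℚ) ≤ ((D i j + D i (j-1) + D (i-1) j + D (i-1) (j-1) : ℤ) : ℚ) := by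
      exact_mod_cast hZ
    linarith
  set contrib : Fin (m+1) → ℚ := fun i => avgMult D i (x i) + avgMult D i (y i) with hc_def
  have hcontrib_nonneg : ∀ i, 0 ≤ contrib i := by
    intro i
    simp only [hc_def]
    have := havg_nonneg i (x i)
    have := havg_nonneg i (y i)
    linarith
  have hS_bonus : ∀ s ∈ S, (1:ℚ)/2 ≤ contrib s := by
    intro s hs
    obtain ⟨k, hk, rfl⟩ := Finset.mem_image.mp hs
    rcases Finset.mem_union.mp hk with hk' | hk'
    · have hσk : w (f k) c₀ = 1 := (Finset.mem_filter.mp hk').2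
      obtain ⟨h1, h2⟩ := climb_bonus (f k) hσk
      have b1 := havg1 (f k) (x (f k)) h1
      have b2 := havg2 (f k) (y (f k)) h2
      simp only [hc_def]
      linarith
    · have hσk : w (f k) c₀ = -1 := (Finset.mem_filter.mp hk').2
      obtain ⟨h1, h2⟩ := desc_bonus (f k) hσk
      have b1 := havg4 (f k) (x (f k)) h1
      have b2 := havg3 (f k) (y (f k)) h2
      simp only [hc_def]
      linarith
  have hsumS : ((Climb.card + Desc.card : ℤ) : ℚ) * (1/2) ≤ ∑ s ∈ S, contrib s := by
    have h := Finset.card_nsmul_le_sum S contrib ((1:ℚ)/2) hS_bonus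
    rw [nsmul_eq_mul] at h
    rw [← cardS]
    push_cast at h ⊢
    linarith
  -- the r₀ contribution
  have havgP0 : ((D r₀ c₀ + D r₀ (c₀-1) + D (r₀-1) c₀ + D (r₀-1) (c₀-1) : ℤ) : ℚ)/4 = avgMult D r₀ c₀ := by
    unfold avgMult
    push_cast
    ring
  -- final case analysis and assembly
  have hmain : ((D r₀ c₀ + D (r₀ - 1) c₀ : ℤ) : ℚ) ≤ contrib r₀ + ((Climb.card + Desc.card : ℤ) : ℚ) * (1/2) := by
    by_cases hχ : x r₀ = c₀
    · -- shared point case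
      have hq : q₀ = r₀ := by
        rw [hq₀_def, ← hχ, Equiv.symm_apply_apply]
      have hcd2 : D (r₀-1) c₀ ≤ D (r₀-1) (c₀ - 1) := by
        have := walk_const' v r₀ q₀ hv hq.symm i₀ (r₀ - 1)
        simp only [hv_def] at this
        omega
      have e : contrib r₀ = avgMult D r₀ c₀ + avgMult D r₀ c₀ := by
        simp only [hc_def]
        rw [hχ, hdest]
      have h2 : ((D r₀ c₀ + D (r₀ - 1) c₀ : ℤ) : ℚ) ≤ avgMult D r₀ c₀ + avgMult D r₀ c₀ := by
        rw [← havgP0]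
        push_cast
        have c1 : (D r₀ c₀ : ℚ) ≤ (D r₀ (c₀-1) : ℚ) := by exact_mod_cast hac
        have c2 : (D (r₀-1) c₀ : ℚ) ≤ (D (r₀-1) (c₀-1) : ℚ) := by exact_mod_cast hcd2
        linarith
      have c3 : (0:ℚ) ≤ ((Climb.card + Desc.card : ℤ) : ℚ) * (1/2) := by
        have h0 : (0:ℤ) ≤ (Climb.card + Desc.card : ℤ) := by
          have := Int.natCast_nonneg Climb.card
          have := Int.natCast_nonneg Desc.card
          linarith
        have h1 : (0:ℚ) ≤ ((Climb.card + Desc.card : ℤ) : ℚ) := by exact_mod_cast h0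
        linarith
      rw [e]
      linarith
    · -- generic case
      have hq : q₀ ≠ r₀ := by
        intro h
        apply hχ
        rw [← h, hq₀_def, Equiv.apply_symm_apply]
      have hxyne : x r₀ ≠ y r₀ := by
        rw [hdest]
        exact hχ
      -- the x-point of row r₀ has a positive corner
      have hxpt : (1:ℚ)/4 ≤ avgMult D r₀ (x r₀) := by
        obtain ⟨j₁, hj₁⟩ := hrz r₀
        have h0 : w r₀ j₁ ≤ 0 := by
          simp only [hw_def]; rw [hj₁]; linarith [hpos (r₀-1) j₁]
        have e1 : w r₀ (y r₀) - w r₀ (y r₀ - 1) = -1 := by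
          have := hw r₀ (y r₀)
          rw [if_neg (fun h => hxyne h.symm), if_pos rfl] at this
          linarith
        have hlip := walk_lip' (w r₀) (x r₀) (y r₀) (hw r₀)
        have hminj := walk_min' (w r₀) (x r₀) (y r₀) (hw r₀) j₁
        have hψub : w r₀ c₀ ≤ 0 := by
          rw [← hdest]
          omega
        have hψlb : -1 ≤ w r₀ c₀ := hlb r₀ c₀
        have e2 : w r₀ (x r₀) - w r₀ (x r₀ - 1) = 1 := by
          have := hw r₀ (x r₀)
          rw [if_pos rfl, if_neg hxyne] at this
          linarith
        have hψc : w r₀ c₀ = w r₀ (y r₀) := by rw [hdest]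
        rcases (by omega : w r₀ c₀ = 0 ∨ w r₀ c₀ = -1) with hψ | hψ
        · -- use square (r₀, x r₀)
          have hx1 : 1 ≤ w r₀ (x r₀) := by omega
          have : 1 ≤ D r₀ (x r₀) := by
            have := hpos (r₀-1) (x r₀)
            simp only [hw_def] at hx1
            omega
          exact havg1 r₀ (x r₀) this
        · -- use square (r₀-1, x r₀ - 1)
          have hmaxx := walk_max' (w r₀) (x r₀) (y r₀) (hw r₀) (x r₀)
          have hx1 : w r₀ (x r₀ - 1) ≤ -1 := by omega
          have : 1 ≤ D (r₀-1) ((x r₀) - 1) := by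
            have := hpos r₀ ((x r₀) - 1)
            simp only [hw_def] at hx1
            omega
          exact havg4 r₀ (x r₀) this
      have h2 : ((2 * D r₀ c₀ + 2 * D (r₀ - 1) c₀ - 1 : ℤ) : ℚ)/4 ≤ avgMult D r₀ c₀ := by
        rw [← havgP0]
        have c1 : (D r₀ c₀ : ℚ) ≤ (D r₀ (c₀-1) : ℚ) := by exact_mod_cast hac
        have c2 : ((D (r₀-1) c₀ : ℤ) : ℚ) - 1 ≤ (D (r₀-1) (c₀-1) : ℚ) := by
          have : ((D (r₀-1) c₀ - 1 : ℤ) : ℚ) ≤ (D (r₀-1) (c₀-1) : ℚ) := by exact_mod_cast hcd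
          push_cast at this
          linarith
        push_cast
        push_cast at c1 c2
        linarith
      have c3 : ((D (r₀-1) c₀ : ℤ) : ℚ) + ((D r₀ c₀ : ℤ) : ℚ) ≤ ((Climb.card + Desc.card : ℤ) : ℚ) := by
        have : ((D (r₀-1) c₀ : ℤ) : ℚ) ≤ (Climb.card : ℤ) := by exact_mod_cast hClimb
        have : ((D r₀ c₀ : ℤ) : ℚ) ≤ (Desc.card : ℤ) := by exact_mod_cast hDesc
        push_cast at *
        linarith
      have e : contrib r₀ = avgMult D r₀ (x r₀) + avgMult D r₀ c₀ := by
        simp only [hc_def]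
        rw [hdest]
      rw [e]
      push_cast at h2 c3 ⊢
      linarith
  -- put everything together
  have hI : lipshitzIndex D x y = ∑ i, contrib i := by
    unfold lipshitzIndex
    rw [← Finset.sum_add_distrib]
  have hsub : insert r₀ S ⊆ Finset.univ := Finset.subset_univ _
  have hle : ∑ i ∈ insert r₀ S, contrib i ≤ ∑ i, contrib i := by
    apply Finset.sum_le_sum_of_subset_of_nonneg hsub
    intro i _ _
    exact hcontrib_nonneg i
  have hins : ∑ i ∈ insert r₀ S, contrib i = contrib r₀ + ∑ s ∈ S, contrib s :=
    Finset.sum_insert hr₀S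
  rw [hI]
  calc ((D r₀ c₀ + D (r₀ - 1) c₀ : ℤ) : ℚ)
      ≤ contrib r₀ + ((Climb.card + Desc.card : ℤ) : ℚ) * (1/2) := hmain
    _ ≤ contrib r₀ + ∑ s ∈ S, contrib s := by linarith [hsumS]
    _ = ∑ i ∈ insert r₀ S, contrib i := hins.symm
    _ ≤ ∑ i, contrib i := hle
private lemma grid_peel_row {m : ℕ} (D : Fin (m+1) → Fin (m+1) → ℤ)
    (x y : Equiv.Perm (Fin (m+1))) (r : Fin (m+1)) (hDom : IsGridDomain D x y) :
    IsGridDomain (fun i j => D i j - (if i = r then 1 else 0)) x y := by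
  intro i j
  have h := hDom i j
  simp only
  linarith

private lemma grid_peel_col {m : ℕ} (D : Fin (m+1) → Fin (m+1) → ℤ)
    (x y : Equiv.Perm (Fin (m+1))) (c : Fin (m+1)) (hDom : IsGridDomain D x y) :
    IsGridDomain (fun i j => D i j - (if j = c then 1 else 0)) x y := by
  intro i j
  have h := hDom i j
  simp only
  linarith

private lemma avg_peel_row {m : ℕ} (D : Fin (m+1) → Fin (m+1) → ℤ) (r i j : Fin (m+1)) :
    avgMult (fun i j => D i j - (if i = r then 1 else 0)) i j
      = avgMult D i j - ((if i = r then (1:ℚ) else 0) + (if i - 1 = r then (1:ℚ) else 0))/2 := by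
  unfold avgMult
  by_cases h1 : i = r <;> by_cases h2 : i - 1 = r <;>
    simp only [h1, h2, if_pos, if_neg, if_true, if_false] <;> push_cast <;> ring

private lemma avg_peel_col {m : ℕ} (D : Fin (m+1) → Fin (m+1) → ℤ) (c i j : Fin (m+1)) :
    avgMult (fun i j => D i j - (if j = c then 1 else 0)) i j
      = avgMult D i j - ((if j = c then (1:ℚ) else 0) + (if j - 1 = c then (1:ℚ) else 0))/2 := by
  unfold avgMult
  by_cases h1 : j = c <;> by_cases h2 : j - 1 = c <;>
    simp only [h1, h2, if_pos, if_neg, if_true, if_false] <;> push_cast <;> ring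

private lemma sum_ind_eq {m : ℕ} (r : Fin (m+1)) :
    (∑ i : Fin (m+1), (if i = r then (1:ℚ) else 0)) = 1 := by
  simp

private lemma sum_ind_pred {m : ℕ} (r : Fin (m+1)) :
    (∑ i : Fin (m+1), (if i - 1 = r then (1:ℚ) else 0)) = 1 := by
  have : ∀ i : Fin (m+1), (i - 1 = r) ↔ (i = r + 1) := by
    intro i
    constructor
    · intro h; rw [← h]; ring
    · intro h; rw [h]; ring
  simp only [this]
  simp

private lemma sum_ind_perm {m : ℕ} (x : Equiv.Perm (Fin (m+1))) (c : Fin (m+1)) :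
    (∑ i : Fin (m+1), (if x i = c then (1:ℚ) else 0)) = 1 := by
  have : ∀ i : Fin (m+1), (x i = c) ↔ (i = x.symm c) := by
    intro i
    exact x.apply_eq_iff_eq_symm_apply
  simp only [this]
  simp

private lemma sum_ind_perm_pred {m : ℕ} (x : Equiv.Perm (Fin (m+1))) (c : Fin (m+1)) :
    (∑ i : Fin (m+1), (if x i - 1 = c then (1:ℚ) else 0)) = 1 := by
  have : ∀ i : Fin (m+1), (x i - 1 = c) ↔ (i = x.symm (c + 1)) := by
    intro i
    rw [x.apply_eq_iff_eq_symm_apply.symm]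
    constructor
    · intro h; rw [← h]; ring
    · intro h; rw [h]; ring
  simp only [this]
  simp

private lemma index_peel_row {m : ℕ} (D : Fin (m+1) → Fin (m+1) → ℤ)
    (x y : Equiv.Perm (Fin (m+1))) (r : Fin (m+1)) :
    lipshitzIndex (fun i j => D i j - (if i = r then 1 else 0)) x y
      = lipshitzIndex D x y - 2 := by
  have hsum : (∑ i : Fin (m+1), ((if i = r then (1:ℚ) else 0) + (if i - 1 = r then (1:ℚ) else 0))/2) = 1 := by
    rw [← Finset.sum_div, Finset.sum_add_distrib, sum_ind_eq, sum_ind_pred]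
    norm_num
  unfold lipshitzIndex
  simp only [avg_peel_row D r]
  rw [Finset.sum_sub_distrib, Finset.sum_sub_distrib, hsum]
  ring

private lemma index_peel_col {m : ℕ} (D : Fin (m+1) → Fin (m+1) → ℤ)
    (x y : Equiv.Perm (Fin (m+1))) (c : Fin (m+1)) :
    lipshitzIndex (fun i j => D i j - (if j = c then 1 else 0)) x y
      = lipshitzIndex D x y - 2 := by
  have hsum : ∀ z : Equiv.Perm (Fin (m+1)),
      (∑ i : Fin (m+1), ((if z i = c then (1:ℚ) else 0) + (if z i - 1 = c then (1:ℚ) else 0))/2) = 1 := by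
    intro z
    rw [← Finset.sum_div, Finset.sum_add_distrib, sum_ind_perm z c, sum_ind_perm_pred z c]
    norm_num
  unfold lipshitzIndex
  simp only [avg_peel_col D c]
  rw [Finset.sum_sub_distrib, Finset.sum_sub_distrib, hsum x, hsum y]
  ring

private lemma keyC {m : ℕ} (N : ℕ) : ∀ (D : Fin (m+1) → Fin (m+1) → ℤ)
    (x y : Equiv.Perm (Fin (m+1))) (r₀ c₀ : Fin (m+1)),
    y r₀ = c₀ → IsGridDomain D x y → (∀ i j, 0 ≤ D i j) →
    (∑ i, ∑ j, (D i j).toNat) ≤ N →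
    ((D r₀ c₀ + D (r₀ - 1) c₀ : ℤ) : ℚ) ≤ lipshitzIndex D x y := by
  induction N with
  | zero =>
    intro D x y r₀ c₀ hdest hDom hpos hsum
    have hz : ∀ i j, D i j = 0 := by
      intro i j
      have h1 : (∑ i, ∑ j, (D i j).toNat) = 0 := Nat.le_zero.mp hsum
      have h2 := Finset.sum_eq_zero_iff.mp h1 i (Finset.mem_univ i)
      have h3 := Finset.sum_eq_zero_iff.mp h2 j (Finset.mem_univ j)
      have := hpos i j
      omega
    exact baseC D x y r₀ c₀ hdest hDom hpos (fun i => ⟨c₀, hz i c₀⟩) r₀ (hz r₀ c₀)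
  | succ N ih =>
    intro D x y r₀ c₀ hdest hDom hpos hsum
    by_cases hrow : ∃ r, ∀ j, 1 ≤ D r j
    · obtain ⟨r, hr⟩ := hrow
      set D' : Fin (m+1) → Fin (m+1) → ℤ := fun i j => D i j - (if i = r then 1 else 0) with hD'
      have hpos' : ∀ i j, 0 ≤ D' i j := by
        intro i j
        simp only [hD']
        by_cases h : i = r
        · rw [if_pos h, h]; linarith [hr j]
        · rw [if_neg h]; linarith [hpos i j]
      have hsum' : (∑ i, ∑ j, (D' i j).toNat) ≤ N := by
        have hlt : (∑ i, ∑ j, (D' i j).toNat) < ∑ i, ∑ j, (D i j).toNat := by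
          apply Finset.sum_lt_sum
          · intro i _
            apply Finset.sum_le_sum
            intro j _
            apply Int.toNat_le_toNat
            simp only [hD']
            by_cases h : i = r <;> simp [h]
          · refine ⟨r, Finset.mem_univ r, ?_⟩
            apply Finset.sum_lt_sum
            · intro j _
              apply Int.toNat_le_toNat
              simp only [hD', if_pos rfl]
              omega
            · refine ⟨0, Finset.mem_univ 0, ?_⟩
              have e1 : D' r 0 = D r 0 - 1 := by simp [hD']
              rw [e1]
              have := hr 0
              omega
        omega
      have hkey := ih D' x y r₀ c₀ hdest (grid_peel_row D x y r hDom) hpos' hsum'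
      rw [index_peel_row D x y r] at hkey
      have hF : ((D r₀ c₀ + D (r₀ - 1) c₀ : ℤ) : ℚ)
          ≤ ((D' r₀ c₀ + D' (r₀ - 1) c₀ : ℤ) : ℚ) + 2 := by
        have h1 : D' r₀ c₀ + D' (r₀ - 1) c₀ ≥ D r₀ c₀ + D (r₀ - 1) c₀ - 2 := by
          simp only [hD']
          by_cases h : r₀ = r <;> by_cases h2 : r₀ - 1 = r <;> simp [h, h2] <;> omega
        have : ((D r₀ c₀ + D (r₀ - 1) c₀ - 2 : ℤ) : ℚ) ≤ ((D' r₀ c₀ + D' (r₀ - 1) c₀ : ℤ) : ℚ) := by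
          exact_mod_cast h1
        push_cast at this ⊢
        linarith
      linarith
    · by_cases hcol : ∃ c, ∀ i, 1 ≤ D i c
      · obtain ⟨c, hc⟩ := hcol
        set D' : Fin (m+1) → Fin (m+1) → ℤ := fun i j => D i j - (if j = c then 1 else 0) with hD'
        have hpos' : ∀ i j, 0 ≤ D' i j := by
          intro i j
          simp only [hD']
          by_cases h : j = c
          · rw [if_pos h, h]; linarith [hc i]
          · rw [if_neg h]; linarith [hpos i j]
        have hsum' : (∑ i, ∑ j, (D' i j).toNat) ≤ N := by
          have hlt : (∑ i, ∑ j, (D' i j).toNat) < ∑ i, ∑ j, (D i j).toNat := by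
            apply Finset.sum_lt_sum
            · intro i _
              apply Finset.sum_le_sum
              intro j _
              apply Int.toNat_le_toNat
              simp only [hD']
              by_cases h : j = c <;> simp [h]
            · refine ⟨0, Finset.mem_univ 0, ?_⟩
              apply Finset.sum_lt_sum
              · intro j _
                apply Int.toNat_le_toNat
                simp only [hD']
                by_cases h : j = c <;> simp [h]
              · refine ⟨c, Finset.mem_univ c, ?_⟩
                have e1 : D' 0 c = D 0 c - 1 := by simp [hD']
                rw [e1]
                have := hc 0
                omega
          omega
        have hkey := ih D' x y r₀ c₀ hdest (grid_peel_col D x y c hDom) hpos' hsum'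
        rw [index_peel_col D x y c] at hkey
        have hF : ((D r₀ c₀ + D (r₀ - 1) c₀ : ℤ) : ℚ)
            ≤ ((D' r₀ c₀ + D' (r₀ - 1) c₀ : ℤ) : ℚ) + 2 := by
          have h1 : D' r₀ c₀ + D' (r₀ - 1) c₀ ≥ D r₀ c₀ + D (r₀ - 1) c₀ - 2 := by
            simp only [hD']
            by_cases h : c₀ = c <;> simp [h] <;> omega
          have : ((D r₀ c₀ + D (r₀ - 1) c₀ - 2 : ℤ) : ℚ) ≤ ((D' r₀ c₀ + D' (r₀ - 1) c₀ : ℤ) : ℚ) := by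
            exact_mod_cast h1
          push_cast at this ⊢
          linarith
        linarith
      · push_neg at hrow hcol
        have hrz : ∀ i, ∃ j, D i j = 0 := by
          intro i
          obtain ⟨j, hj⟩ := hrow i
          exact ⟨j, by have := hpos i j; omega⟩
        obtain ⟨i₀, hi₀⟩ := hcol c₀
        exact baseC D x y r₀ c₀ hdest hDom hpos hrz i₀ (by have := hpos i₀ c₀; omega)

/-- Proposition 3.3 of Manolescu–Ozsváth–Thurston: for a grid
with exactly one `O`-marking (in the square `(r₀,c₀)`) marked for
destabilization, every positive enhanced domain `(D, ε₁, ρ₁)` — i.e. `D ≥ 0`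
and, with `f = O_{i₁}(D) − ρ₁` and local multiplicities `a` (above-left),
`b = D r₀ c₀` (above-right, the `O`-square), `c` (below-left), `d`
(below-right) around the destabilization point `(r₀,c₀) ∈ y`, one has
`a ≥ f`, `b ≥ f`, `c ≥ f + ε₁ − 1`, `d ≥ f + ε₁` — has index
`I(D,ε,ρ) = I(D) − ε₁ − 2f ≥ 0`. -/
theorem one_destabilization_nonnegative_index
    {n : ℕ} [NeZero n] (D : Fin n → Fin n → ℤ) (x y : Equiv.Perm (Fin n))
    (r₀ c₀ : Fin n) (ρ : ℤ) (ε : ℕ) (hε : ε ≤ 1)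
    (hdest : y r₀ = c₀)
    (hDom : IsGridDomain D x y)
    (hpos : ∀ i j, 0 ≤ D i j)
    (ha : D r₀ (c₀ - 1) ≥ D r₀ c₀ - ρ)
    (hb : D r₀ c₀ ≥ D r₀ c₀ - ρ)
    (hc : D (r₀ - 1) (c₀ - 1) ≥ D r₀ c₀ - ρ + (ε : ℤ) - 1)
    (hd : D (r₀ - 1) c₀ ≥ D r₀ c₀ - ρ + (ε : ℤ)) :
    0 ≤ lipshitzIndex D x y - (ε : ℚ) - 2 * ((D r₀ c₀ - ρ : ℤ) : ℚ) := by
  obtain ⟨m, rfl⟩ : ∃ m, n = m + 1 := by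
    rcases n with _ | m
    · exact absurd rfl (NeZero.ne 0)
    · exact ⟨m, rfl⟩
  have hkey := keyC (∑ i, ∑ j, (D i j).toNat) D x y r₀ c₀ hdest hDom hpos le_rfl
  have hρ : 0 ≤ ρ := by linarith
  have hdQ : ((D r₀ c₀ - ρ + (ε:ℤ) : ℤ) : ℚ) ≤ ((D (r₀ - 1) c₀ : ℤ) : ℚ) := by exact_mod_cast hd
  have hρQ : (0:ℚ) ≤ ((ρ : ℤ) : ℚ) := by exact_mod_cast hρ
  push_cast at hkey hdQ hρQ ⊢
  linarith
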